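/- Let A : ℝ → Matrix (Fin n) (Fin n) ℝ be a differentiable matrix-valued function such that A(x) is symmetric for every x. Suppose λ : ℝ → ℝ and v : ℝ → EuclideanSpace ℝ (Fin n) are differentiable functions such that for every x, A(x) · v(x) = λ(x) • v(x) and ‖v(x)‖ = 1 (a differentiable unit eigenpair). Then for every x, the derivative of λ satisfies λ'(x) = v(x)ᵀ · A'(x) · v(x), where A'(x) is the entrywise derivative of A at x. -/

import Mathlib

open scoped RealInnerProductSpace

/-- Derivative of a distinct eigenvalue of a differentiable family of symmetric
matrices: `λ'(x) = v(x)ᵀ A'(x) v(x)` for a differentiable unit eigenpair. -/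
theorem stmt_0 {n : ℕ} (A A' : ℝ → Matrix (Fin n) (Fin n) ℝ)
    (hA' : ∀ x i j, HasDerivAt (fun y => A y i j) (A' x i j) x)
    (hsymm : ∀ x, (A x).IsSymm)
    (lam : ℝ → ℝ) (v : ℝ → EuclideanSpace ℝ (Fin n))
    (hlam : Differentiable ℝ lam) (hv : Differentiable ℝ v)
    (heig : ∀ x i, ∑ j, A x i j * v x j = lam x * v x i)
    (hunit : ∀ x, ‖v x‖ = 1) :
    ∀ x, deriv lam x = ∑ i, ∑ j, v x i * A' x i j * v x j := by
  intro x
  -- coordinate derivatives of v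
  have hvi : ∀ i, DifferentiableAt ℝ (fun y => v y i) x := by
    intro i
    exact ((EuclideanSpace.proj i : EuclideanSpace ℝ (Fin n) →L[ℝ] ℝ).differentiable.comp hv) x
  set w : Fin n → ℝ := fun i => deriv (fun y => v y i) x with hw
  have hwd : ∀ i, HasDerivAt (fun y => v y i) (w i) x := fun i => (hvi i).hasDerivAt
  -- unit norm: ∑ v i * v i = 1
  have hsq : ∀ y, ∑ i, v y i * v y i = 1 := by
    intro y
    have h1 : ⟪v y, v y⟫ = ∑ i, v y i * v y i := by
      simp only [PiLp.inner_apply]; exact Finset.sum_congr rfl fun i _ => by simp [sq]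
    have h2 : ⟪v y, v y⟫ = ‖v y‖ ^ 2 := real_inner_self_eq_norm_sq (v y)
    rw [← h1, h2, hunit y]; norm_num
  -- orthogonality ⟨v, w⟩ = 0
  have horth : ∑ i, v x i * w i = 0 := by
    have h1 : HasDerivAt (fun y => ∑ i, v y i * v y i)
        (∑ i, (w i * v x i + v x i * w i)) x :=
      HasDerivAt.fun_sum fun i _ => (hwd i).mul (hwd i)
    have h2 : (fun y => ∑ i, v y i * v y i) = fun _ : ℝ => (1 : ℝ) :=
      funext fun y => hsq y
    rw [h2] at h1
    have h3 : (∑ i, (w i * v x i + v x i * w i)) = 0 :=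
      h1.unique (hasDerivAt_const x 1)
    have h4 : (∑ i, (w i * v x i + v x i * w i)) = 2 * ∑ i, v x i * w i := by
      rw [Finset.mul_sum]; exact Finset.sum_congr rfl fun i _ => by ring
    linarith [h4 ▸ h3]
  -- lam equals the quadratic form
  have hlameq : lam = fun y => ∑ i, ∑ j, v y i * A y i j * v y j := by
    funext y
    calc lam y = lam y * ∑ i, v y i * v y i := by rw [hsq]; ring
      _ = ∑ i, v y i * (lam y * v y i) := by rw [Finset.mul_sum]; exact Finset.sum_congr rfl fun i _ => by ring
      _ = ∑ i, v y i * ∑ j, A y i j * v y j := by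
            exact Finset.sum_congr rfl fun i _ => by rw [heig]
      _ = ∑ i, ∑ j, v y i * A y i j * v y j := by
            exact Finset.sum_congr rfl fun i _ => by rw [Finset.mul_sum]; exact Finset.sum_congr rfl fun j _ => by ring
  -- derivative of quadratic form
  have hD : HasDerivAt (fun y => ∑ i, ∑ j, v y i * A y i j * v y j)
      (∑ i, ∑ j, ((w i * A x i j + v x i * A' x i j) * v x j
        + v x i * A x i j * w j)) x :=
    HasDerivAt.fun_sum fun i _ => HasDerivAt.fun_sum fun j _ =>
      ((hwd i).mul (hA' x i j)).mul (hwd j)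
  have hderiv : deriv lam x = ∑ i, ∑ j, ((w i * A x i j + v x i * A' x i j) * v x j
        + v x i * A x i j * w j) := by
    rw [hlameq]; exact hD.deriv
  -- split the sum
  have hsplit : ∑ i, ∑ j, ((w i * A x i j + v x i * A' x i j) * v x j
        + v x i * A x i j * w j)
      = (∑ i, ∑ j, w i * A x i j * v x j) + (∑ i, ∑ j, v x i * A' x i j * v x j)
        + (∑ i, ∑ j, v x i * A x i j * w j) := by
    rw [← Finset.sum_add_distrib, ← Finset.sum_add_distrib]
    refine Finset.sum_congr rfl fun i _ => ?_
    rw [← Finset.sum_add_distrib, ← Finset.sum_add_distrib]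
    exact Finset.sum_congr rfl fun j _ => by ring
  have hc1 : ∑ i, ∑ j, w i * A x i j * v x j = lam x * ∑ i, v x i * w i := by
    calc ∑ i, ∑ j, w i * A x i j * v x j
        = ∑ i, w i * ∑ j, A x i j * v x j := by
          exact Finset.sum_congr rfl fun i _ => by rw [Finset.mul_sum]; exact Finset.sum_congr rfl fun j _ => by ring
      _ = ∑ i, w i * (lam x * v x i) := Finset.sum_congr rfl fun i _ => by rw [heig]
      _ = lam x * ∑ i, v x i * w i := by rw [Finset.mul_sum]; exact Finset.sum_congr rfl fun i _ => by ring
  have hs : ∀ i j, A x i j = A x j i := fun i j => (hsymm x).apply j i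
  have hc2 : ∑ i, ∑ j, v x i * A x i j * w j = lam x * ∑ i, v x i * w i := by
    rw [Finset.sum_comm]
    calc ∑ j, ∑ i, v x i * A x i j * w j
        = ∑ j, w j * ∑ i, A x j i * v x i := by
          refine Finset.sum_congr rfl fun j _ => ?_
          rw [Finset.mul_sum]
          exact Finset.sum_congr rfl fun i _ => by rw [hs i j]; ring
      _ = ∑ j, w j * (lam x * v x j) := Finset.sum_congr rfl fun j _ => by rw [heig]
      _ = lam x * ∑ i, v x i * w i := by rw [Finset.mul_sum]; exact Finset.sum_congr rfl fun i _ => by ring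
  rw [hderiv, hsplit, hc1, hc2, horth]
  ring
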